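/- For every positive integer $n$, the derivative of the Riemann zeta function at the trivial zero $-2n$ is given by $$\zeta'(-2n) = \frac{(-1)^{n}\,\zeta(2n+1)\,(2n)!}{2\,(2\pi)^{2n}}.$$ -/

import Mathlib

open Complex Real

lemma sin_val_aux (n : ℕ) : Complex.sin (π * (2 * n + 1) / 2) = (-1) ^ n := by
  have h : (π * (2 * n + 1) / 2 : ℂ) = ((n * π + π / 2 : ℝ) : ℂ) := by
    push_cast; ring
  rw [h, ← Complex.ofReal_sin, Real.sin_add_pi_div_two]
  have : Real.cos (n * π) = (-1) ^ n := by
    have := Real.cos_nat_mul_pi_sub 0 n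
    simpa using this
  rw [this]
  push_cast; ring

/-- The derivative of the Riemann zeta function at the trivial zero `-2n`:
`ζ'(-2n) = (-1)^n ζ(2n+1) (2n)! / (2 (2π)^(2n))`. -/
theorem deriv_riemannZeta_neg_two_mul (n : ℕ) (hn : 0 < n) :
    deriv riemannZeta (-2 * n) =
      ((-1) ^ n * riemannZeta (2 * n + 1) * (2 * n).factorial) / (2 * (2 * π) ^ (2 * n)) := by
  set s₀ : ℂ := 2 * n + 1 with hs₀
  have hres₀ : s₀.re = 2 * n + 1 := by simp [hs₀]
  have hn1 : (1 : ℝ) ≤ n := by exact_mod_cast hn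
  have h1re : (1 : ℝ) < s₀.re := by rw [hres₀]; linarith
  -- eventual equality with the functional-equation RHS
  set g : ℂ → ℂ := fun s => 2 * (2 * π) ^ (-s) * Complex.Gamma s * Complex.cos (π * s / 2)
      * riemannZeta s with hg
  have hev : (fun s => riemannZeta (1 - s)) =ᶠ[nhds s₀] g := by
    have hmem : {s : ℂ | 1 < s.re} ∈ nhds s₀ :=
      (isOpen_lt continuous_const Complex.continuous_re).mem_nhds h1re
    filter_upwards [hmem] with s hs
    have hs1 : (1 : ℝ) < s.re := hs
    refine riemannZeta_one_sub (fun m => ?_) (fun h => ?_)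
    · intro h
      rw [h] at hs1
      simp at hs1
      linarith [hs1, (Nat.cast_nonneg m : (0:ℝ) ≤ m)]
    · rw [h] at hs1; simp at hs1
  -- derivative of LHS
  have hne1 : (1 - s₀ : ℂ) ≠ 1 := by
    intro h
    have : s₀ = 0 := by linear_combination -h
    rw [this] at hres₀
    simp at hres₀
    have : (0:ℝ) < 2 * n + 1 := by positivity
    linarith
  have hL : HasDerivAt (fun s => riemannZeta (1 - s))
      (deriv riemannZeta (1 - s₀) * (0 - 1)) s₀ :=
    (differentiableAt_riemannZeta hne1).hasDerivAt.comp s₀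
      ((hasDerivAt_const s₀ (1:ℂ)).sub (hasDerivAt_id s₀))
  -- derivative of RHS
  have h2pi : (2 * π : ℂ) ≠ 0 := by
    simp [Complex.ofReal_ne_zero, Real.pi_ne_zero]
  have hA : DifferentiableAt ℂ (fun s : ℂ => 2 * (2 * π) ^ (-s) * Complex.Gamma s) s₀ := by
    refine (((differentiableAt_id.neg).const_cpow (Or.inl h2pi)).const_mul 2).mul ?_
    refine Complex.differentiableAt_Gamma _ (fun m => ?_)
    intro h
    have : s₀.re = (-(m:ℂ)).re := by rw [h]
    simp [hres₀] at this
    have h0 : (0:ℝ) < 2 * n + 1 := by positivity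
    linarith [this, (Nat.cast_nonneg m : (0:ℝ) ≤ m)]
  have hB : HasDerivAt (fun s : ℂ => Complex.cos (π * s / 2))
      (-Complex.sin (π * s₀ / 2) * (π * 1 / 2)) s₀ :=
    (Complex.hasDerivAt_cos _).comp s₀ (((hasDerivAt_id s₀).const_mul (π:ℂ)).div_const 2)
  have hC : DifferentiableAt ℂ riemannZeta s₀ := by
    refine differentiableAt_riemannZeta (fun h => ?_)
    rw [h] at hres₀
    simp at hres₀
    have : (0:ℝ) < 2 * (n:ℝ) := by positivity
    linarith
  have hcos0 : Complex.cos (π * s₀ / 2) = 0 := by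
    have : (π * s₀ / 2 : ℂ) = ((n * π + π / 2 : ℝ) : ℂ) := by
      rw [hs₀]; push_cast; ring
    rw [this, ← Complex.ofReal_cos, Real.cos_add, Real.cos_pi_div_two, Real.sin_pi_div_two]
    have h0 : Real.sin (↑n * π) = 0 := by
      simpa [mul_comm] using Real.sin_nat_mul_pi n
    simp [h0]
  have hG : HasDerivAt g
      ((deriv (fun s : ℂ => 2 * (2 * π) ^ (-s) * Complex.Gamma s) s₀ * Complex.cos (π * s₀ / 2)
        + (2 * (2 * π) ^ (-s₀) * Complex.Gamma s₀) * (-Complex.sin (π * s₀ / 2) * (π * 1 / 2)))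
          * riemannZeta s₀
        + (2 * (2 * π) ^ (-s₀) * Complex.Gamma s₀ * Complex.cos (π * s₀ / 2))
          * deriv riemannZeta s₀) s₀ :=
    ((hA.hasDerivAt.mul hB).mul hC.hasDerivAt)
  -- equate derivatives
  have hderiv_eq : deriv riemannZeta (1 - s₀) * (0 - 1) =
      (2 * (2 * π) ^ (-s₀) * Complex.Gamma s₀) * (-Complex.sin (π * s₀ / 2) * (π * 1 / 2))
        * riemannZeta s₀ := by
    have h1 := hL.deriv
    have h2 := hG.deriv
    rw [hcos0] at h2
    have h3 : deriv (fun s => riemannZeta (1 - s)) s₀ = deriv g s₀ := hev.deriv_eq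
    rw [h1, h2] at h3
    rw [h3]; ring
  -- now plug in values
  have hGam : Complex.Gamma s₀ = (2 * n).factorial := by
    rw [hs₀]
    have : (2 * (n:ℂ) + 1) = ((2 * n : ℕ) : ℂ) + 1 := by push_cast; ring
    rw [this, Complex.Gamma_nat_eq_factorial]
  have hsin : Complex.sin (π * s₀ / 2) = (-1) ^ n := by
    rw [hs₀]; exact sin_val_aux n
  have hpow : (2 * (π:ℂ)) ^ (-s₀) = ((2 * (π:ℂ)) ^ (2 * n + 1))⁻¹ := by
    rw [Complex.cpow_neg, hs₀]
    congr 1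
    have : (2 * (n:ℂ) + 1) = ((2 * n + 1 : ℕ) : ℂ) := by push_cast; ring
    rw [this, Complex.cpow_natCast]
  have h1s : (1 - s₀ : ℂ) = -2 * n := by rw [hs₀]; ring
  rw [h1s, hGam, hsin, hpow] at hderiv_eq
  have hpow_ne : ((2 * (π:ℂ)) ^ (2 * n + 1)) ≠ 0 := pow_ne_zero _ h2pi
  have hpne : ((2 * (π:ℂ)) ^ (2 * n)) ≠ 0 := pow_ne_zero _ h2pi
  have hζ : riemannZeta s₀ = riemannZeta (2 * n + 1) := by rw [hs₀]
  rw [hζ] at hderiv_eq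
  field_simp at hderiv_eq
  rw [show (-2 * (n:ℂ)) = -(2 * (n:ℂ)) from by ring]
  rw [eq_div_iff (by exact mul_ne_zero two_ne_zero hpne)]
  apply mul_right_cancel₀ h2pi
  linear_combination (-2) * hderiv_eq
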